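/- The transverse box category Ŝ is thick: if f : {0,1}^m → {0,1}^n lies in Ŝ and f = δ∘g is the unique factorization with δ ∈ □ and g : {0,1}^m → {0,1}^m cotransverse, then g ∈ Ŝ. -/

import Mathlib

open scoped ENNReal

open Classical in
noncomputable def dCube {n : ℕ} (x y : Fin n → Bool) : ℝ≥0∞ :=
  if x ≤ y then ((Finset.univ.filter fun i => x i ≠ y i).card : ℝ≥0∞) else ⊤

/-- Maps between binary cubes. -/
abbrev CubeMap (m n : ℕ) := (Fin m → Bool) → (Fin n → Bool)

/-- Cotransverse maps: strictly increasing poset maps preserving `d̄₁`-distance `1`. -/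
def Cotransverse {m n : ℕ} (f : CubeMap m n) : Prop :=
  StrictMono f ∧ ∀ x y, dCube x y = 1 → dCube (f x) (f y) = 1

/-- Membership in the box category `□`: composites of coface maps. -/
inductive IsBox : ∀ {m n : ℕ}, CubeMap m n → Prop
  | id (n : ℕ) : IsBox (@id (Fin n → Bool))
  | coface {n : ℕ} (i : Fin (n + 1)) (a : Bool) :
      IsBox (fun x : Fin n → Bool => (i.insertNth a x : Fin (n + 1) → Bool))
  | comp {m n p : ℕ} {f : CubeMap m n} {g : CubeMap n p} :
      IsBox f → IsBox g → IsBox (g ∘ f)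

/-- Membership in the transverse box category `□̂`: cotransverse maps `φ` such that
`φ ∘ δ ∈ □` for every `δ ∈ □` with `φ ∘ δ` injective. -/
def InHatBox {m n : ℕ} (f : CubeMap m n) : Prop :=
  Cotransverse f ∧ ∀ (p : ℕ) (δ : CubeMap p m), IsBox δ →
    Function.Injective (f ∘ δ) → IsBox (f ∘ δ)

/-- Normal-form predicate for box maps. -/
def BoxP {m n : ℕ} (f : CubeMap m n) : Prop :=
  ∃ s : Fin m → Fin n, StrictMono s ∧ (∀ x i, f x (s i) = x i) ∧
    (∀ j, (∀ i, s i ≠ j) → ∀ x y, f x j = f y j)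

lemma boxP_of_isBox : ∀ {m n : ℕ} {f : CubeMap m n}, IsBox f → BoxP f := by
  intro m n f hf
  induction hf with
  | id n => exact ⟨_root_.id, strictMono_id, fun x i => rfl,
      fun j hj => absurd rfl (hj j)⟩
  | coface i a =>
      refine ⟨i.succAbove, Fin.strictMono_succAbove i, fun x t => Fin.insertNth_apply_succAbove .., ?_⟩
      intro j hj x y
      have hji : j = i := by
        by_contra hne
        obtain ⟨t, ht⟩ := Fin.exists_succAbove_eq hne
        exact hj t ht
      subst hji
      simp
  | @comp m q p f g hf hg ihf ihg =>
      obtain ⟨s₁, hs₁, he₁, hc₁⟩ := ihf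
      obtain ⟨s₂, hs₂, he₂, hc₂⟩ := ihg
      refine ⟨s₂ ∘ s₁, hs₂.comp hs₁, fun x i => by simp [Function.comp, he₂, he₁], ?_⟩
      intro j hj x y
      by_cases h : ∃ t, s₂ t = j
      · obtain ⟨t, rfl⟩ := h
        have ht : ∀ i, s₁ i ≠ t := fun i hi => hj i (by simp [Function.comp, hi])
        simp only [Function.comp_apply, he₂]
        exact hc₁ t ht x y
      · push_neg at h
        exact hc₂ j h _ _

lemma isBox_of_boxP : ∀ {n m : ℕ} (f : CubeMap m n), BoxP f → IsBox f := by
  intro n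
  induction n with
  | zero =>
      intro m f ⟨s, hs, he, hc⟩
      have hm : m = 0 := by
        rcases Nat.eq_zero_or_pos m with h | h
        · exact h
        · exact (s ⟨0, h⟩).elim0
      subst hm
      have : f = id := by
        funext x j; exact j.elim0
      rw [this]; exact IsBox.id 0
  | succ n ih =>
      intro m f ⟨s, hs, he, hc⟩
      by_cases hm : m = n + 1
      · subst hm
        have hsid : s = _root_.id := by
          have hsurj : Function.Surjective s :=
            Finite.surjective_of_injective hs.injective
          exact (hs.range_inj strictMono_id).mp
            (by rw [Set.range_id, Set.range_eq_univ.mpr hsurj])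
        have : f = id := by
          funext x j
          have := he x j
          rwa [hsid] at this
        rw [this]; exact IsBox.id _
      · -- find j₀ outside range of s
        have hlt : m < n + 1 := by
          have : m ≤ n + 1 := by
            have := Fintype.card_le_of_injective s hs.injective
            simpa using this
          omega
        have hns : ¬ Function.Surjective s := by
          intro hs'
          have := Fintype.card_le_of_surjective s hs'
          simp at this; omega
        simp only [Function.Surjective, not_forall] at hns
        obtain ⟨j₀, hj₀⟩ := hns
        have hj₀' : ∀ i, s i ≠ j₀ := fun i hi => hj₀ ⟨i, hi⟩
        set a : Bool := f (fun _ => false) j₀ with ha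
        set f' : CubeMap m n := fun x => j₀.removeNth (f x) with hf'
        have hsucc : ∀ i : Fin m, ∃ t, j₀.succAbove t = s i :=
          fun i => Fin.exists_succAbove_eq (hj₀' i)
        choose s' hs' using hsucc
        have hbox' : IsBox f' := by
          apply ih
          refine ⟨s', ?_, ?_, ?_⟩
          · intro i i' hii
            have h2 : j₀.succAbove (s' i) < j₀.succAbove (s' i') := by
              rw [hs', hs']; exact hs hii
            exact (Fin.strictMono_succAbove j₀).lt_iff_lt.mp h2
          · intro x i
            show (f x) (j₀.succAbove (s' i)) = x i
            rw [hs']; exact he x i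
          · intro t ht x y
            show (f x) (j₀.succAbove t) = (f y) (j₀.succAbove t)
            apply hc
            intro i hi
            exact ht i ((Fin.strictMono_succAbove j₀).injective (by rw [hs', hi]))
        have hfa : ∀ x, f x j₀ = a := fun x => hc j₀ hj₀' x _
        have : f = (fun y : Fin n → Bool => j₀.insertNth a y) ∘ f' := by
          funext x
          show f x = j₀.insertNth a (j₀.removeNth (f x))
          rw [← hfa x]
          exact (Fin.insertNth_self_removeNth j₀ (f x)).symm
        rw [this]
        exact IsBox.comp hbox' (IsBox.coface j₀ a)

lemma boxP_injective {m n : ℕ} {f : CubeMap m n} (hf : BoxP f) :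
    Function.Injective f := by
  obtain ⟨s, _, he, _⟩ := hf
  intro x y hxy
  funext i
  rw [← he x i, ← he y i, hxy]

lemma isBox_cancel {p m n : ℕ} (δ : CubeMap m n) (h : CubeMap p m)
    (hδ : IsBox δ) (hk : IsBox (δ ∘ h)) : IsBox h := by
  obtain ⟨sδ, hsδ, heδ, hcδ⟩ := boxP_of_isBox hδ
  obtain ⟨sk, hsk, hek, hck⟩ := boxP_of_isBox hk
  apply isBox_of_boxP
  have hmem : ∀ i : Fin p, ∃ t, sδ t = sk i := by
    intro i
    by_contra hno
    push_neg at hno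
    have hcst := hcδ (sk i) hno (h (fun _ => false)) (h (fun _ => true))
    have h1 : (δ ∘ h) (fun _ => false) (sk i) = false := hek _ i
    have h2 : (δ ∘ h) (fun _ => true) (sk i) = true := hek _ i
    simp only [Function.comp_apply] at h1 h2
    rw [hcst] at h1
    rw [h1] at h2
    exact Bool.false_ne_true h2
  choose sh hsh using hmem
  refine ⟨sh, ?_, ?_, ?_⟩
  · intro i i' hii
    have h2 : sδ (sh i) < sδ (sh i') := by rw [hsh, hsh]; exact hsk hii
    exact hsδ.lt_iff_lt.mp h2
  · intro x i
    have h1 : δ (h x) (sδ (sh i)) = h x (sh i) := heδ (h x) (sh i)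
    rw [hsh] at h1
    rw [← h1]
    exact hek x i
  · intro j hj x y
    have h1 : h x j = δ (h x) (sδ j) := (heδ (h x) j).symm
    have h2 : h y j = δ (h y) (sδ j) := (heδ (h y) j).symm
    rw [h1, h2]
    apply hck
    intro i hi
    exact hj i (hsδ.injective (by rw [hsh, hi]))

/-- The transverse box category `□̂` is thick: if `f ∈ □̂` and `f = δ ∘ g` with
`δ ∈ □` and `g` a cotransverse endomap, then `g ∈ □̂`. -/
theorem stmt15 {m n : ℕ} (f : CubeMap m n) (g : CubeMap m m) (δ : CubeMap m n)
    (hf : InHatBox f) (hg : Cotransverse g) (hδ : IsBox δ) (hfac : f = δ ∘ g) :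
    InHatBox g := by
  refine ⟨hg, ?_⟩
  intro p δ' hδ' hinj
  have hassoc : f ∘ δ' = δ ∘ (g ∘ δ') := by rw [hfac]; rfl
  have hδinj : Function.Injective δ := boxP_injective (boxP_of_isBox hδ)
  have hinj' : Function.Injective (f ∘ δ') := by
    rw [hassoc]
    exact hδinj.comp hinj
  have hbox : IsBox (f ∘ δ') := hf.2 p δ' hδ' hinj'
  rw [hassoc] at hbox
  exact isBox_cancel δ (g ∘ δ') hδ hbox
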